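/- Let H be a complex Hilbert space, (W,w) a fusion Bessel sequence with ℓ²-direct sum K_W, and 𝒱 a closed subspace of H. Let L : K_W → H be a bounded operator with range contained in 𝒱, and let (v_i)_{i∈I} be weights. Suppose there exists δ > 0 such that δ ≤ v_i⁻¹ γ(L ∘ M_i) for all i ∈ I. Then for each i the subspace V_i := L(M_i(K_W)) is closed, and (V_i, v_i)_{i∈I} is a fusion Bessel sequence for 𝒱 with upper Bessel bound ‖L‖²/δ²; that is, Σ_{i∈I} v_i² ‖π_{V_i} f‖² ≤ (‖L‖²/δ²) ‖f‖² for all f ∈ H. -/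

import Mathlib

open scoped ENNReal
set_option synthInstance.maxHeartbeats 1000000
set_option maxHeartbeats 1000000
noncomputable section

/-- Reduced minimum modulus of a bounded operator between inner product spaces:
`γ(A) = inf {‖A x‖ : ‖x‖ = 1, x ∈ (ker A)ᗮ}`. -/
def redMinMod {E F : Type*} [NormedAddCommGroup E] [InnerProductSpace ℂ E]
    [NormedAddCommGroup F] [InnerProductSpace ℂ F] (A : E →L[ℂ] F) : ℝ :=
  sInf ((fun x => ‖A x‖) '' {x : E | ‖x‖ = 1 ∧ x ∈ (LinearMap.ker (A : E →ₗ[ℂ] F))ᗮ})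

/-- Lower bound property of the reduced minimum modulus on `(ker A)ᗮ`. -/
lemma redMinMod_mul_norm_le {E F : Type*} [NormedAddCommGroup E] [InnerProductSpace ℂ E]
    [NormedAddCommGroup F] [InnerProductSpace ℂ F] (A : E →L[ℂ] F) {g : E}
    (hg : g ∈ (LinearMap.ker (A : E →ₗ[ℂ] F))ᗮ) : redMinMod A * ‖g‖ ≤ ‖A g‖ := by
  rcases eq_or_ne g 0 with rfl | hg0
  · simp
  have hng : (0:ℝ) < ‖g‖ := norm_pos_iff.mpr hg0
  set u : E := ((‖g‖ : ℂ))⁻¹ • g with hu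
  have hun : ‖u‖ = 1 := by
    rw [hu, norm_smul]
    simp [hng.ne']
  have humem : u ∈ (LinearMap.ker (A : E →ₗ[ℂ] F))ᗮ := Submodule.smul_mem _ _ hg
  have hmem : ‖A u‖ ∈ (fun x => ‖A x‖) '' {x : E | ‖x‖ = 1 ∧ x ∈ (LinearMap.ker (A : E →ₗ[ℂ] F))ᗮ} :=
    ⟨u, ⟨hun, humem⟩, rfl⟩
  have hbdd : BddBelow ((fun x => ‖A x‖) '' {x : E | ‖x‖ = 1 ∧ x ∈ (LinearMap.ker (A : E →ₗ[ℂ] F))ᗮ}) := by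
    refine ⟨0, ?_⟩
    rintro r ⟨x, -, rfl⟩
    exact norm_nonneg _
  have h1 : redMinMod A ≤ ‖A u‖ := csInf_le hbdd hmem
  have h2 : ‖A u‖ = ‖g‖⁻¹ * ‖A g‖ := by
    rw [hu, map_smul, norm_smul]
    simp
  rw [h2] at h1
  have := mul_le_mul_of_nonneg_right h1 hng.le
  calc redMinMod A * ‖g‖ ≤ ‖g‖⁻¹ * ‖A g‖ * ‖g‖ := this
    _ = ‖A g‖ := by field_simp

/-- If `L : K_W → H` has range contained in `𝒱` and `δ ≤ v i⁻¹ γ(L ∘ M_i)` for all `i`,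
then the subspaces `V_i = L(M_i(K_W))` are closed and `(V,v)` is a fusion Bessel sequence
for `𝒱` with upper Bessel bound `‖L‖² / δ²`. -/
theorem fusionBessel_of_leftInverse_image
    {H : Type*} [NormedAddCommGroup H] [InnerProductSpace ℂ H] [CompleteSpace H]
    {I : Type*} [Countable I] [DecidableEq I]
    (W : I → Submodule ℂ H) [∀ i, CompleteSpace (W i)]
    (w : I → ℝ) (hw : ∀ i, 0 < w i)
    (TW : lp (fun i => W i) 2 →L[ℂ] H)
    (hTW : ∀ g : lp (fun i => W i) 2, HasSum (fun i => (w i : ℂ) • (g i : H)) (TW g))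
    (𝒱 : Submodule ℂ H) [CompleteSpace 𝒱]
    (L : lp (fun i => W i) 2 →L[ℂ] H) (hLran : LinearMap.range (L : lp (fun i => W i) 2 →ₗ[ℂ] H) ≤ 𝒱)
    (M : I → (lp (fun i => W i) 2 →L[ℂ] lp (fun i => W i) 2))
    (hM : ∀ (k : I) (g : lp (fun i => W i) 2) (j : I), M k g j = if j = k then g j else 0)
    (v : I → ℝ) (hv : ∀ i, 0 < v i)
    (δ : ℝ) (hδ : 0 < δ) (hδle : ∀ i, δ ≤ (v i)⁻¹ * redMinMod (L ∘L M i)) :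
    ∃ hcl : ∀ i, IsClosed ((LinearMap.range (L ∘L M i : lp (fun i => W i) 2 →ₗ[ℂ] H) : Submodule ℂ H) : Set H),
      ∀ f : H,
        haveI : ∀ i, CompleteSpace (LinearMap.range (L ∘L M i : lp (fun i => W i) 2 →ₗ[ℂ] H) : Submodule ℂ H) :=
          fun i => (hcl i).completeSpace_coe
        (Summable fun i =>
            (v i) ^ 2 * ‖(Submodule.orthogonalProjectionOnto (LinearMap.range (L ∘L M i : lp (fun i => W i) 2 →ₗ[ℂ] H)) f : H)‖ ^ 2) ∧
        ∑' i, (v i) ^ 2 * ‖(Submodule.orthogonalProjectionOnto (LinearMap.range (L ∘L M i : lp (fun i => W i) 2 →ₗ[ℂ] H)) f : H)‖ ^ 2 ≤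
          (‖L‖ ^ 2 / δ ^ 2) * ‖f‖ ^ 2 := by
  classical
  set K := lp (fun i => W i) 2 with hKdef
  set A : I → (K →L[ℂ] H) := fun i => L ∘L M i with hA
  -- δ * v i is a lower bound for the reduced minimum modulus
  have hc : ∀ i, δ * v i ≤ redMinMod (A i) := by
    intro i
    have h1 := hδle i
    have hvi := hv i
    have := mul_le_mul_of_nonneg_right h1 hvi.le
    calc δ * v i ≤ (v i)⁻¹ * redMinMod (A i) * v i := this
      _ = redMinMod (A i) := by field_simp
  have hlow : ∀ i, ∀ g ∈ (LinearMap.ker (A i : K →ₗ[ℂ] H))ᗮ, δ * v i * ‖g‖ ≤ ‖(A i) g‖ := by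
    intro i g hg
    exact le_trans (mul_le_mul_of_nonneg_right (hc i) (norm_nonneg g))
      (redMinMod_mul_norm_le (A i) hg)
  -- decomposition: every value of A i is attained on (ker (A i))ᗮ
  have hdec : ∀ (i : I) (g : K), ∃ q ∈ (LinearMap.ker (A i : K →ₗ[ℂ] H))ᗮ, (A i) q = (A i) g := by
    intro i g
    haveI : CompleteSpace (LinearMap.ker (A i : K →ₗ[ℂ] H)) :=
      (ContinuousLinearMap.isClosed_ker (A i)).completeSpace_coe
    obtain ⟨p, hp, q, hq, hpq⟩ := (LinearMap.ker (A i : K →ₗ[ℂ] H)).exists_add_mem_mem_orthogonal g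
    refine ⟨q, hq, ?_⟩
    have hp0 : (A i) p = 0 := hp
    rw [hpq, map_add, hp0, zero_add]
  -- closedness of the ranges
  have hcl : ∀ i, IsClosed ((LinearMap.range (A i : K →ₗ[ℂ] H) : Submodule ℂ H) : Set H) := by
    intro i
    set Ki := (LinearMap.ker (A i : K →ₗ[ℂ] H))ᗮ with hKi
    haveI : CompleteSpace Ki := (Submodule.isClosed_orthogonal _).completeSpace_coe
    set B : Ki →L[ℂ] H := (A i).comp Ki.subtypeL with hB
    have hpos : (0:ℝ) < δ * v i := mul_pos hδ (hv i)
    have hanti : AntilipschitzWith ⟨(δ * v i)⁻¹, inv_nonneg.mpr hpos.le⟩ B := by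
      apply B.antilipschitz_of_bound
      intro x
      have h1 := hlow i (x : K) x.2
      have h2 : ‖(x : K)‖ = ‖x‖ := rfl
      have h3 : B x = (A i) (x : K) := rfl
      change ‖x‖ ≤ (δ * v i)⁻¹ * ‖B x‖
      rw [← div_eq_inv_mul, le_div_iff₀ hpos, h3]
      calc ‖x‖ * (δ * v i) = δ * v i * ‖(x : K)‖ := by rw [h2]; ring
        _ ≤ ‖(A i) (x : K)‖ := h1
    have hrange : Set.range B = ((LinearMap.range (A i : K →ₗ[ℂ] H) : Submodule ℂ H) : Set H) := by
      ext y
      simp only [Set.mem_range, SetLike.mem_coe, LinearMap.mem_range]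
      constructor
      · rintro ⟨q, rfl⟩
        exact ⟨(q : K), rfl⟩
      · rintro ⟨g, rfl⟩
        obtain ⟨q, hq, hqe⟩ := hdec i g
        exact ⟨⟨q, hq⟩, hqe⟩
    have := hanti.isClosed_range B.uniformContinuous
    rwa [hrange] at this
  refine ⟨hcl, ?_⟩
  intro f
  haveI hCS : ∀ i, CompleteSpace (LinearMap.range (A i : K →ₗ[ℂ] H) : Submodule ℂ H) :=
    fun i => (hcl i).completeSpace_coe
  set y : I → H := fun i => (Submodule.orthogonalProjectionOnto (LinearMap.range (A i : K →ₗ[ℂ] H)) f : H) with hy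
  have hymem : ∀ i, y i ∈ LinearMap.range (A i : K →ₗ[ℂ] H) :=
    fun i => (Submodule.orthogonalProjectionOnto (LinearMap.range (A i : K →ₗ[ℂ] H)) f).2
  -- choose minimal-norm style preimages
  have hgex : ∀ i, ∃ g, g ∈ (LinearMap.ker (A i : K →ₗ[ℂ] H))ᗮ ∧ (A i) g = y i := by
    intro i
    obtain ⟨g, hg⟩ := hymem i
    obtain ⟨q, hq, hqe⟩ := hdec i g
    exact ⟨q, hq, hqe.trans hg⟩
  choose g hgK hgA using hgex
  have hgle : ∀ i, δ * v i * ‖g i‖ ≤ ‖y i‖ := by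
    intro i
    have h1 := hlow i (g i) (hgK i)
    rwa [hgA i] at h1
  -- key inner product identity
  have hinner : ∀ i, (inner ℂ f (y i) : ℂ) = (‖y i‖ : ℂ) ^ 2 := by
    intro i
    have h0 : (inner ℂ (f - y i) (y i) : ℂ) = 0 :=
      Submodule.starProjection_inner_eq_zero f (y i) (hymem i)
    rw [inner_sub_left, sub_eq_zero] at h0
    rw [h0, inner_self_eq_norm_sq_to_K]
    norm_cast
  -- norm bound for coordinate projections M i
  have hMnorm : ∀ (i : I) (h : K), ‖(M i) h‖ ≤ ‖h‖ := by
    intro i h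
    have hinn : (inner ℂ ((M i) h) ((M i) h) : ℂ) = inner ℂ (h i) (h i) := by
      rw [lp.inner_eq_tsum, tsum_eq_single i]
      · rw [hM i h i, if_pos rfl]
      · intro k hk
        rw [hM i h k, if_neg hk]
        simp
    have e1 : ‖(M i) h‖ ^ 2 = ‖(h i : W i)‖ ^ 2 := by
      have h' := congrArg (RCLike.re (K := ℂ)) hinn
      rwa [inner_self_eq_norm_sq, inner_self_eq_norm_sq] at h'
    have e2 : ‖(h i : W i)‖ ≤ ‖h‖ := lp.norm_apply_le_norm two_ne_zero h i
    have e3 : ‖(M i) h‖ = ‖(h i : W i)‖ := by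
      have e4 := congrArg Real.sqrt e1
      rwa [Real.sqrt_sq (norm_nonneg _), Real.sqrt_sq (norm_nonneg _)] at e4
    rw [e3]
    exact e2
  -- the key finite-sum bound
  have hkey : ∀ s : Finset I, ∑ i ∈ s, (v i) ^ 2 * ‖y i‖ ^ 2 ≤ ‖L‖ ^ 2 / δ ^ 2 * ‖f‖ ^ 2 := by
    intro s
    set S := ∑ i ∈ s, (v i) ^ 2 * ‖y i‖ ^ 2 with hS
    have hS0 : 0 ≤ S := Finset.sum_nonneg fun i _ => by positivity
    set m : I → K := fun i => (((v i) ^ 2 : ℝ) : ℂ) • (M i) (g i) with hm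
    set x := ∑ i ∈ s, m i with hx
    have hLm : ∀ i, L ((M i) (g i)) = y i := fun i => hgA i
    have hLx : L x = ∑ i ∈ s, (((v i) ^ 2 : ℝ) : ℂ) • y i := by
      rw [hx, map_sum]
      refine Finset.sum_congr rfl fun i _ => ?_
      rw [hm]
      simp only [map_smul]
      rw [hLm i]
    have hfLx : (inner ℂ f (L x) : ℂ) = (S : ℂ) := by
      rw [hLx, inner_sum, hS]
      push_cast
      refine Finset.sum_congr rfl fun i _ => ?_
      rw [inner_smul_right, hinner i]
    -- pairwise orthogonality of the m i
    have horth : ∀ i j, j ≠ i → (inner ℂ (m i) (m j) : ℂ) = 0 := by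
      intro i j hij
      rw [hm]
      simp only [inner_smul_left, inner_smul_right]
      have h0 : (inner ℂ ((M i) (g i)) ((M j) (g j)) : ℂ) = 0 := by
        rw [lp.inner_eq_tsum]
        have hz : ∀ k, (inner ℂ (((M i) (g i)) k) (((M j) (g j)) k) : ℂ) = 0 := by
          intro k
          rcases eq_or_ne k j with rfl | hkj
          · have hzz : ((M i) (g i)) k = 0 := by rw [hM i (g i) k, if_neg hij]
            rw [hzz, inner_zero_left]
          · have hzz : ((M j) (g j)) k = 0 := by rw [hM j (g j) k, if_neg hkj]
            rw [hzz, inner_zero_right]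
        simp only [hz]
        exact tsum_zero
      rw [h0]
      ring
    have hxsq : ‖x‖ ^ 2 = ∑ i ∈ s, ‖m i‖ ^ 2 := by
      have hxx : (inner ℂ x x : ℂ) = ∑ i ∈ s, inner ℂ (m i) (m i) := by
        rw [hx, sum_inner]
        refine Finset.sum_congr rfl fun i hi => ?_
        rw [inner_sum, Finset.sum_eq_single i]
        · intro j _ hji
          exact horth i j hji
        · intro hni
          exact absurd hi hni
      have hre := congrArg (RCLike.re (K := ℂ)) hxx
      rw [inner_self_eq_norm_sq, map_sum] at hre
      rw [hre]
      exact Finset.sum_congr rfl fun i _ => (inner_self_eq_norm_sq _)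
    -- bound each ‖m i‖
    have hmle : ∀ i ∈ s, ‖m i‖ ^ 2 ≤ (v i) ^ 2 * ‖y i‖ ^ 2 / δ ^ 2 := by
      intro i _
      have hvi := hv i
      have h1 : ‖m i‖ = (v i) ^ 2 * ‖(M i) (g i)‖ := by
        rw [hm, norm_smul]
        simp [abs_of_pos (pow_pos hvi 2)]
      have h2 : ‖(M i) (g i)‖ ≤ ‖g i‖ := hMnorm i (g i)
      have h3 : δ * v i * ‖g i‖ ≤ ‖y i‖ := hgle i
      have h4 : ‖m i‖ ≤ v i * ‖y i‖ / δ := by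
        rw [h1, div_eq_inv_mul]
        have hg0 : (0:ℝ) ≤ ‖g i‖ := norm_nonneg _
        have hM0 : (0:ℝ) ≤ ‖(M i) (g i)‖ := norm_nonneg _
        have key : (v i) ^ 2 * ‖g i‖ ≤ δ⁻¹ * (v i * ‖y i‖) := by
          rw [← mul_le_mul_iff_right₀ hδ]
          calc δ * ((v i) ^ 2 * ‖g i‖) = v i * (δ * v i * ‖g i‖) := by ring
            _ ≤ v i * ‖y i‖ := mul_le_mul_of_nonneg_left h3 hvi.le
            _ = δ * (δ⁻¹ * (v i * ‖y i‖)) := by field_simp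
        calc (v i) ^ 2 * ‖(M i) (g i)‖ ≤ (v i) ^ 2 * ‖g i‖ :=
            mul_le_mul_of_nonneg_left h2 (sq_nonneg (v i))
          _ ≤ δ⁻¹ * (v i * ‖y i‖) := key
      have hm0 : (0:ℝ) ≤ ‖m i‖ := norm_nonneg _
      have hyv0 : (0:ℝ) ≤ v i * ‖y i‖ / δ :=
        div_nonneg (mul_nonneg hvi.le (norm_nonneg _)) hδ.le
      have := mul_self_le_mul_self hm0 h4
      calc ‖m i‖ ^ 2 = ‖m i‖ * ‖m i‖ := by ring
        _ ≤ (v i * ‖y i‖ / δ) * (v i * ‖y i‖ / δ) := this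
        _ = (v i) ^ 2 * ‖y i‖ ^ 2 / δ ^ 2 := by ring
    have hxle : ‖x‖ ^ 2 ≤ S / δ ^ 2 := by
      rw [hxsq, hS, Finset.sum_div]
      exact Finset.sum_le_sum hmle
    have hre : S ≤ ‖f‖ * ‖L x‖ := by
      have h := re_inner_le_norm (𝕜 := ℂ) f (L x)
      rw [hfLx] at h
      simpa using h
    have hLxle : ‖L x‖ ≤ ‖L‖ * ‖x‖ := L.le_opNorm x
    rcases eq_or_lt_of_le hS0 with hS0' | hSpos
    · rw [← hS0']
      positivity
    · have hSle : S ≤ ‖f‖ * (‖L‖ * ‖x‖) := by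
        refine hre.trans ?_
        exact mul_le_mul_of_nonneg_left hLxle (norm_nonneg f)
      have hx0 : (0:ℝ) ≤ ‖x‖ := norm_nonneg _
      have hfL0 : (0:ℝ) ≤ ‖f‖ * ‖L‖ := by positivity
      have hsq : S ^ 2 ≤ (‖f‖ * ‖L‖) ^ 2 * ‖x‖ ^ 2 := by
        calc S ^ 2 ≤ (‖f‖ * (‖L‖ * ‖x‖)) ^ 2 := pow_le_pow_left₀ hS0 hSle 2
          _ = (‖f‖ * ‖L‖) ^ 2 * ‖x‖ ^ 2 := by ring
      have hδ2 : (0:ℝ) < δ ^ 2 := pow_pos hδ 2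
      have h3 : δ ^ 2 * ‖x‖ ^ 2 ≤ S := by
        rw [← le_div_iff₀' hδ2]
        exact hxle
      have hC0 : (0:ℝ) ≤ (‖f‖ * ‖L‖) ^ 2 := sq_nonneg _
      have h4 : δ ^ 2 * S * S ≤ (‖f‖ * ‖L‖) ^ 2 * S := by
        calc δ ^ 2 * S * S = δ ^ 2 * S ^ 2 := by ring
          _ ≤ δ ^ 2 * ((‖f‖ * ‖L‖) ^ 2 * ‖x‖ ^ 2) := mul_le_mul_of_nonneg_left hsq hδ2.le
          _ = (‖f‖ * ‖L‖) ^ 2 * (δ ^ 2 * ‖x‖ ^ 2) := by ring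
          _ ≤ (‖f‖ * ‖L‖) ^ 2 * S := mul_le_mul_of_nonneg_left h3 hC0
      have h5 : δ ^ 2 * S ≤ (‖f‖ * ‖L‖) ^ 2 := le_of_mul_le_mul_right h4 hSpos
      rw [div_mul_eq_mul_div, le_div_iff₀ hδ2]
      calc S * δ ^ 2 = δ ^ 2 * S := by ring
        _ ≤ (‖f‖ * ‖L‖) ^ 2 := h5
        _ = ‖L‖ ^ 2 * ‖f‖ ^ 2 := by ring
  have hsum : Summable fun i => (v i) ^ 2 * ‖y i‖ ^ 2 :=
    summable_of_sum_le (fun i => by positivity) hkey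
  exact ⟨hsum, Summable.tsum_le_of_sum_le hsum hkey⟩
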